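/- Let q : ℝ → ℝ be continuous. The linear map that sends a continuous function w : [0,2π] → ℝ to the matrix Φ_q(2π)·∫₀^{2π} w(t)·Φ_q(t)⁻¹·N₀·Φ_q(t) dt ∈ M₂(ℝ) has range equal to the 3-dimensional subspace {Φ_q(2π)·M : M ∈ M₂(ℝ), tr M = 0}; moreover the same conclusion holds when the domain is restricted to smooth functions w supported in an arbitrarily prescribed nonempty open subinterval of (0,2π). -/

import Mathlib

open Real Set Matrix

/-- The matrix `N₀ = [[0,0],[1,0]]`. -/
def N0 : Matrix (Fin 2) (Fin 2) ℝ := !![0, 0; 1, 0]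

/-- The matrix `∫₀^{2π} w(t)·Φ(t)⁻¹·N₀·Φ(t) dt`, computed entrywise. -/
noncomputable def monInt (w : ℝ → ℝ) (Φ : ℝ → Matrix (Fin 2) (Fin 2) ℝ) :
    Matrix (Fin 2) (Fin 2) ℝ :=
  Matrix.of fun i j : Fin 2 =>
    ∫ t in (0:ℝ)..(2 * Real.pi), w t * (((Φ t)⁻¹ * N0 * Φ t) i j)

open MeasureTheory

lemma bump_test {a b : ℝ} (h0 : 0 ≤ a) (hb : b ≤ 2 * π) {g : ℝ → ℝ} (hg : Continuous g)
    (h : ∀ w : ℝ → ℝ, ContDiff ℝ (⊤ : ℕ∞) w → tsupport w ⊆ Ioo a b →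
      ∫ t in (0:ℝ)..(2 * π), w t * g t = 0)
    {t₀ : ℝ} (ht₀ : t₀ ∈ Ioo a b) : g t₀ = 0 := by
  by_contra hne
  obtain ⟨ht₀a, ht₀b⟩ := ht₀
  set c : ℝ := if 0 < g t₀ then 1 else -1 with hc
  set G : ℝ → ℝ := fun t => c * g t with hG
  have hGc : Continuous G := continuous_const.mul hg
  have hGpos : 0 < G t₀ := by
    rcases lt_trichotomy (g t₀) 0 with h1 | h1 | h1
    · simp only [hG, hc, if_neg (not_lt.mpr h1.le)]; nlinarith
    · exact absurd h1 hne
    · simp only [hG, hc, if_pos h1]; nlinarith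
  set ε := G t₀ / 2 with hε
  obtain ⟨δ0, hδ0pos, hδ0⟩ := Metric.continuousAt_iff.mp hGc.continuousAt ε (by positivity)
  set δ := min δ0 (min (t₀ - a) (b - t₀)) with hδdef
  have hδpos : 0 < δ := by
    simp only [hδdef, lt_min_iff]
    exact ⟨hδ0pos, by linarith, by linarith⟩
  have hδa : δ ≤ t₀ - a := le_trans (min_le_right _ _) (min_le_left _ _)
  have hδb : δ ≤ b - t₀ := le_trans (min_le_right _ _) (min_le_right _ _)
  have hGlower : ∀ s, |s - t₀| < δ → ε < G s := by
    intro s hs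
    have := hδ0 (show dist s t₀ < δ0 by rw [Real.dist_eq]; exact lt_of_lt_of_le hs (min_le_left _ _))
    rw [Real.dist_eq] at this
    have h2 := abs_lt.mp this
    simp only [hε] at *
    linarith [h2.1, h2.2]
  set f : ContDiffBump t₀ := ⟨δ/4, δ/2, by positivity, by linarith⟩ with hf
  have hsupp : tsupport (f : ℝ → ℝ) ⊆ Ioo a b := by
    rw [f.tsupport_eq]
    intro x hx
    rw [Metric.mem_closedBall, Real.dist_eq] at hx
    have hx' : |x - t₀| ≤ δ/2 := hx
    have := abs_le.mp hx'
    constructor <;> [linarith [this.1]; linarith [this.2]]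
  have hzero := h f f.contDiff hsupp
  set H : ℝ → ℝ := fun t => f t * G t with hH
  have hHc : Continuous H := f.continuous.mul hGc
  have hHzero : ∫ t in (0:ℝ)..(2 * π), H t = 0 := by
    have : ∀ t, H t = c * ((f : ℝ → ℝ) t * g t) := by intro t; simp only [hH, hG]; ring
    rw [intervalIntegral.integral_congr (fun t _ => this t),
      intervalIntegral.integral_const_mul, hzero, mul_zero]
  have hHnonneg : ∀ t, 0 ≤ H t := by
    intro t
    by_cases hmem : t ∈ Metric.closedBall t₀ (δ/2)
    · rw [Metric.mem_closedBall, Real.dist_eq] at hmem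
      have : ε < G t := hGlower t (by linarith [abs_nonneg (t - t₀)])
      have hε' : 0 < ε := by positivity
      exact mul_nonneg f.nonneg (by linarith)
    · have : (f : ℝ → ℝ) t = 0 := by
        apply image_eq_zero_of_notMem_tsupport
        rw [f.tsupport_eq]; exact hmem
      simp [hH, this]
  have hord1 : (0:ℝ) ≤ t₀ - δ/4 := by linarith
  have hord2 : t₀ + δ/4 ≤ 2 * π := by linarith
  have hmidpos : (0:ℝ) < ∫ t in (t₀ - δ/4)..(t₀ + δ/4), H t := by
    apply intervalIntegral.intervalIntegral_pos_of_pos_on (hHc.intervalIntegrable _ _)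
    · intro x hx
      obtain ⟨hx1, hx2⟩ := hx
      have hf1 : (f : ℝ → ℝ) x = 1 := by
        have hmem : x ∈ Metric.closedBall t₀ (δ/4) := by
          rw [Metric.mem_closedBall, Real.dist_eq, abs_le]
          constructor <;> linarith
        exact f.one_of_mem_closedBall hmem
      have : ε < G x := hGlower x (by rw [abs_lt]; constructor <;> linarith)
      have hε' : 0 < ε := by positivity
      simp only [hH, hf1, one_mul]
      linarith
    · linarith
  have hsplit1 : (∫ t in (0:ℝ)..(t₀ - δ/4), H t) + ∫ t in (t₀ - δ/4)..(t₀ + δ/4), H t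
      = ∫ t in (0:ℝ)..(t₀ + δ/4), H t :=
    intervalIntegral.integral_add_adjacent_intervals
      (hHc.intervalIntegrable (μ := MeasureTheory.volume) _ _)
      (hHc.intervalIntegrable (μ := MeasureTheory.volume) _ _)
  have hsplit2 : (∫ t in (0:ℝ)..(t₀ + δ/4), H t) + ∫ t in (t₀ + δ/4)..(2*π), H t
      = ∫ t in (0:ℝ)..(2*π), H t :=
    intervalIntegral.integral_add_adjacent_intervals
      (hHc.intervalIntegrable (μ := MeasureTheory.volume) _ _)
      (hHc.intervalIntegrable (μ := MeasureTheory.volume) _ _)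
  have hnn1 : (0:ℝ) ≤ ∫ t in (0:ℝ)..(t₀ - δ/4), H t :=
    intervalIntegral.integral_nonneg hord1 (fun u _ => hHnonneg u)
  have hnn2 : (0:ℝ) ≤ ∫ t in (t₀ + δ/4)..(2*π), H t :=
    intervalIntegral.integral_nonneg hord2 (fun u _ => hHnonneg u)
  linarith

lemma indep (q : ℝ → ℝ) (Φ : ℝ → Matrix (Fin 2) (Fin 2) ℝ)
    (hΦ : ∀ t : ℝ, ∀ i j, HasDerivAt (fun s => Φ s i j) ((!![0, 1; q t, 0] * Φ t) i j) t)
    (hdet : ∀ t, Φ t 0 0 * Φ t 1 1 - Φ t 0 1 * Φ t 1 0 = 1)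
    {a b t₀ : ℝ} (ht₀ : t₀ ∈ Ioo a b) (c0 c1 c2 : ℝ)
    (hvanish : ∀ t ∈ Ioo a b,
      c0 * (Φ t 0 0 * Φ t 0 0) + c1 * (Φ t 0 0 * Φ t 0 1) + c2 * (Φ t 0 1 * Φ t 0 1) = 0) :
    c0 = 0 ∧ c1 = 0 ∧ c2 = 0 := by
  have hu : ∀ t j, HasDerivAt (fun s => Φ s 0 j) (Φ t 1 j) t := by
    intro t j; simpa [Matrix.mul_apply, Fin.sum_univ_two] using hΦ t 0 j
  have hv : ∀ t j, HasDerivAt (fun s => Φ s 1 j) (q t * Φ t 0 j) t := by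
    intro t j; simpa [Matrix.mul_apply, Fin.sum_univ_two] using hΦ t 1 j
  set g : ℝ → ℝ := fun t =>
    c0 * (Φ t 0 0 * Φ t 0 0) + c1 * (Φ t 0 0 * Φ t 0 1) + c2 * (Φ t 0 1 * Φ t 0 1) with hgdef
  set G1 : ℝ → ℝ := fun t =>
    c0 * (Φ t 1 0 * Φ t 0 0 + Φ t 0 0 * Φ t 1 0) +
    c1 * (Φ t 1 0 * Φ t 0 1 + Φ t 0 0 * Φ t 1 1) +
    c2 * (Φ t 1 1 * Φ t 0 1 + Φ t 0 1 * Φ t 1 1) with hG1def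
  have hg' : ∀ t, HasDerivAt g (G1 t) t := by
    intro t
    exact ((((hu t 0).mul (hu t 0)).const_mul c0).add
        (((hu t 0).mul (hu t 1)).const_mul c1)).add
      (((hu t 1).mul (hu t 1)).const_mul c2)
  have hG1zero : ∀ t ∈ Ioo a b, G1 t = 0 := by
    intro t ht
    have hev : g =ᶠ[nhds t] fun _ => 0 :=
      Filter.eventuallyEq_of_mem (Ioo_mem_nhds ht.1 ht.2) hvanish
    exact (hg' t).unique ((hasDerivAt_const t (0:ℝ)).congr_of_eventuallyEq hev)
  have hG1' : HasDerivAt G1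
      (2 * (c0 * (Φ t₀ 1 0 * Φ t₀ 1 0) + c1 * (Φ t₀ 1 0 * Φ t₀ 1 1) + c2 * (Φ t₀ 1 1 * Φ t₀ 1 1))
        + 2 * q t₀ * g t₀) t₀ := by
    have h := ((((hv t₀ 0).mul (hu t₀ 0)).add ((hu t₀ 0).mul (hv t₀ 0))).const_mul c0).add
        (((((hv t₀ 0).mul (hu t₀ 1)).add ((hu t₀ 0).mul (hv t₀ 1))).const_mul c1).add
        ((((hv t₀ 1).mul (hu t₀ 1)).add ((hu t₀ 1).mul (hv t₀ 1))).const_mul c2))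
    convert h using 1
    · rfl
    · rfl
    · funext t; simp only [hG1def, Pi.add_apply, Pi.mul_apply]; ring
    · simp only [hgdef]; ring
  have e3full : 2 * (c0 * (Φ t₀ 1 0 * Φ t₀ 1 0) + c1 * (Φ t₀ 1 0 * Φ t₀ 1 1)
      + c2 * (Φ t₀ 1 1 * Φ t₀ 1 1)) + 2 * q t₀ * g t₀ = 0 := by
    have hev : G1 =ᶠ[nhds t₀] fun _ => 0 :=
      Filter.eventuallyEq_of_mem (Ioo_mem_nhds ht₀.1 ht₀.2) hG1zero
    exact hG1'.unique ((hasDerivAt_const t₀ (0:ℝ)).congr_of_eventuallyEq hev)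
  have e1 : c0 * (Φ t₀ 0 0 * Φ t₀ 0 0) + c1 * (Φ t₀ 0 0 * Φ t₀ 0 1)
      + c2 * (Φ t₀ 0 1 * Φ t₀ 0 1) = 0 := hvanish t₀ ht₀
  have e2 : c0 * (Φ t₀ 1 0 * Φ t₀ 0 0 + Φ t₀ 0 0 * Φ t₀ 1 0) +
      c1 * (Φ t₀ 1 0 * Φ t₀ 0 1 + Φ t₀ 0 0 * Φ t₀ 1 1) +
      c2 * (Φ t₀ 1 1 * Φ t₀ 0 1 + Φ t₀ 0 1 * Φ t₀ 1 1) = 0 := hG1zero t₀ ht₀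
  have hg0 : g t₀ = 0 := hvanish t₀ ht₀
  rw [hg0, mul_zero, add_zero] at e3full
  have e3 : c0 * (Φ t₀ 1 0 * Φ t₀ 1 0) + c1 * (Φ t₀ 1 0 * Φ t₀ 1 1)
      + c2 * (Φ t₀ 1 1 * Φ t₀ 1 1) = 0 := by linarith
  have wr : Φ t₀ 0 0 * Φ t₀ 1 1 - Φ t₀ 0 1 * Φ t₀ 1 0 = 1 := hdet t₀
  set U := Φ t₀ 0 0; set V := Φ t₀ 0 1; set U' := Φ t₀ 1 0; set V' := Φ t₀ 1 1
  refine ⟨?_, ?_, ?_⟩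
  · linear_combination V' ^ 2 * e1 - V * V' * e2 + V ^ 2 * e3 - c0 * (U * V' - V * U' + 1) * wr
  · linear_combination (-2 * U' * V') * e1 + (U * V' + U' * V) * e2 - 2 * U * V * e3
      - c1 * (U * V' - V * U' + 1) * wr
  · linear_combination U' ^ 2 * e1 - U * U' * e2 + U ^ 2 * e3 - c2 * (U * V' - V * U' + 1) * wr


set_option maxHeartbeats 1000000 in
set_option synthInstance.maxHeartbeats 200000 in
lemma surj (q : ℝ → ℝ) (Φ : ℝ → Matrix (Fin 2) (Fin 2) ℝ)
    (hΦ : ∀ t : ℝ, ∀ i j, HasDerivAt (fun s => Φ s i j) ((!![0, 1; q t, 0] * Φ t) i j) t)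
    (hdet : ∀ t, Φ t 0 0 * Φ t 1 1 - Φ t 0 1 * Φ t 1 0 = 1)
    (bump : ∀ {a b : ℝ}, 0 ≤ a → b ≤ 2 * π → ∀ {g : ℝ → ℝ}, Continuous g →
      (∀ w : ℝ → ℝ, ContDiff ℝ (⊤ : ℕ∞) w → tsupport w ⊆ Ioo a b →
        ∫ t in (0:ℝ)..(2 * π), w t * g t = 0) →
      ∀ t ∈ Ioo a b, g t = 0)
    {a b : ℝ} (h0 : 0 ≤ a) (hab : a < b) (hb : b ≤ 2 * π) (x y z : ℝ) :
    ∃ w : ℝ → ℝ, ContDiff ℝ (⊤ : ℕ∞) w ∧ tsupport w ⊆ Ioo a b ∧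
      (∫ t in (0:ℝ)..(2 * π), w t * (Φ t 0 0 * Φ t 0 0)) = x ∧
      (∫ t in (0:ℝ)..(2 * π), w t * (Φ t 0 0 * Φ t 0 1)) = y ∧
      (∫ t in (0:ℝ)..(2 * π), w t * (Φ t 0 1 * Φ t 0 1)) = z := by
  have hcont : ∀ i j, Continuous fun t => Φ t i j := fun i j =>
    continuous_iff_continuousAt.mpr fun t => (hΦ t i j).continuousAt
  -- the submodule of admissible test functions
  set p : Submodule ℝ (ℝ → ℝ) :=
    { carrier := {w : ℝ → ℝ | ContDiff ℝ (⊤ : ℕ∞) w ∧ tsupport w ⊆ Ioo a b}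
      add_mem' := by
        rintro f g ⟨hf1, hf2⟩ ⟨hg1, hg2⟩
        refine ⟨hf1.add hg1, ?_⟩
        refine (closure_mono (Function.support_add f g)).trans ?_
        rw [closure_union]
        exact union_subset hf2 hg2
      zero_mem' := by
        refine ⟨contDiff_const, ?_⟩
        simp [tsupport]
      smul_mem' := by
        rintro c w ⟨hw1, hw2⟩
        exact ⟨hw1.const_smul c, (tsupport_smul_subset_right (fun _ => c) w).trans hw2⟩
    } with hp
  -- the linear map to ℝ³
  have hint : ∀ (w : p) (k : ℝ → ℝ), Continuous k →
      IntervalIntegrable (fun t => (w : ℝ → ℝ) t * k t) volume 0 (2 * π) :=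
    fun w k hk => ((w.2.1.continuous).mul hk).intervalIntegrable _ _
  set uu : ℝ → ℝ := fun t => Φ t 0 0 * Φ t 0 0 with huu
  set uv : ℝ → ℝ := fun t => Φ t 0 0 * Φ t 0 1 with huv
  set vv : ℝ → ℝ := fun t => Φ t 0 1 * Φ t 0 1 with hvv
  have hcuu : Continuous uu := (hcont 0 0).mul (hcont 0 0)
  have hcuv : Continuous uv := (hcont 0 0).mul (hcont 0 1)
  have hcvv : Continuous vv := (hcont 0 1).mul (hcont 0 1)
  set T : p →ₗ[ℝ] EuclideanSpace ℝ (Fin 3) :=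
    { toFun := fun w => (WithLp.equiv 2 (Fin 3 → ℝ)).symm
        ![∫ t in (0:ℝ)..(2 * π), (w : ℝ → ℝ) t * uu t,
          ∫ t in (0:ℝ)..(2 * π), (w : ℝ → ℝ) t * uv t,
          ∫ t in (0:ℝ)..(2 * π), (w : ℝ → ℝ) t * vv t]
      map_add' := by
        intro w1 w2
        ext i
        have e : ∀ k : ℝ → ℝ, Continuous k →
            (∫ t in (0:ℝ)..(2 * π), ((w1 : ℝ → ℝ) t + (w2 : ℝ → ℝ) t) * k t)
            = (∫ t in (0:ℝ)..(2 * π), (w1 : ℝ → ℝ) t * k t)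
              + ∫ t in (0:ℝ)..(2 * π), (w2 : ℝ → ℝ) t * k t := by
          intro k hk
          rw [← intervalIntegral.integral_add (hint w1 k hk) (hint w2 k hk)]
          apply intervalIntegral.integral_congr
          intro t _
          ring
        fin_cases i <;>
          simp [WithLp.equiv_symm_apply, PiLp.toLp_apply, Submodule.coe_add, Pi.add_apply,
            e uu hcuu, e uv hcuv, e vv hcvv]
      map_smul' := by
        intro c w
        ext i
        have e : ∀ k : ℝ → ℝ,
            (∫ t in (0:ℝ)..(2 * π), (c * (w : ℝ → ℝ) t) * k t)
            = c * ∫ t in (0:ℝ)..(2 * π), (w : ℝ → ℝ) t * k t := by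
          intro k
          rw [← intervalIntegral.integral_const_mul]
          apply intervalIntegral.integral_congr
          intro t _
          ring
        fin_cases i <;>
          simp [WithLp.equiv_symm_apply, PiLp.toLp_apply, Submodule.coe_smul, Pi.smul_apply, smul_eq_mul,
            e uu, e uv, e vv]
    } with hT
  have hrange : LinearMap.range T = ⊤ := by
    haveI : CompleteSpace (LinearMap.range T) := FiniteDimensional.complete ℝ _
    rw [← Submodule.orthogonal_eq_bot_iff]
    rw [Submodule.eq_bot_iff]
    intro cv hcv
    set c0 := cv 0 with hc0; set c1 := cv 1 with hc1; set c2 := cv 2 with hc2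
    set g : ℝ → ℝ := fun t => c0 * uu t + c1 * uv t + c2 * vv t with hgdef
    have hgc : Continuous g := ((continuous_const.mul hcuu).add
      (continuous_const.mul hcuv)).add (continuous_const.mul hcvv)
    have key : ∀ w : ℝ → ℝ, ContDiff ℝ (⊤ : ℕ∞) w → tsupport w ⊆ Ioo a b →
        ∫ t in (0:ℝ)..(2 * π), w t * g t = 0 := by
      intro w hw1 hw2
      have hwp : w ∈ p := ⟨hw1, hw2⟩
      have horth := hcv (T ⟨w, hwp⟩) (LinearMap.mem_range_self T ⟨w, hwp⟩)
      have hipc : (inner ℝ (T ⟨w, hwp⟩) cv : ℝ)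
          = (∫ t in (0:ℝ)..(2 * π), w t * uu t) * c0
            + ((∫ t in (0:ℝ)..(2 * π), w t * uv t) * c1
            + (∫ t in (0:ℝ)..(2 * π), w t * vv t) * c2) := by
        simp [hT, PiLp.inner_apply, RCLike.inner_apply, Fin.sum_univ_three,
          WithLp.equiv_symm_apply, PiLp.toLp_apply, ← hc0, ← hc1, ← hc2]
        ring
      rw [horth] at hipc
      have hw' : Continuous w := hw1.continuous
      have hsum : (∫ t in (0:ℝ)..(2 * π), w t * g t)
          = (∫ t in (0:ℝ)..(2 * π), w t * uu t) * c0
            + ((∫ t in (0:ℝ)..(2 * π), w t * uv t) * c1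
            + (∫ t in (0:ℝ)..(2 * π), w t * vv t) * c2) := by
        rw [← intervalIntegral.integral_mul_const, ← intervalIntegral.integral_mul_const,
          ← intervalIntegral.integral_mul_const,
          ← intervalIntegral.integral_add (((hw'.fun_mul hcuv).intervalIntegrable _ _).mul_const _)
            (((hw'.fun_mul hcvv).intervalIntegrable _ _).mul_const _),
          ← intervalIntegral.integral_add (((hw'.fun_mul hcuu).intervalIntegrable _ _).mul_const _)
            ((((hw'.fun_mul hcuv).intervalIntegrable _ _).mul_const _).add
              (((hw'.fun_mul hcvv).intervalIntegrable _ _).mul_const _))]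
        apply intervalIntegral.integral_congr
        intro t _
        simp only [hgdef]
        ring
      rw [hsum, ← hipc]
    have hgzero : ∀ t ∈ Ioo a b, g t = 0 := bump h0 hb hgc key
    set t₀ : ℝ := (a + b) / 2 with ht₀def
    have ht₀ : t₀ ∈ Ioo a b := ⟨by simp only [ht₀def]; linarith, by simp only [ht₀def]; linarith⟩
    have hvanish : ∀ t ∈ Ioo a b,
        c0 * (Φ t 0 0 * Φ t 0 0) + c1 * (Φ t 0 0 * Φ t 0 1) + c2 * (Φ t 0 1 * Φ t 0 1) = 0 :=
      fun t ht => hgzero t ht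
    obtain ⟨h1, h2, h3⟩ := indep q Φ hΦ hdet ht₀ c0 c1 c2 hvanish
    ext i
    fin_cases i
    · exact h1
    · exact h2
    · exact h3
  obtain ⟨w, hw⟩ := LinearMap.range_eq_top.mp hrange ((WithLp.equiv 2 (Fin 3 → ℝ)).symm ![x, y, z])
  have hw' : ∀ i : Fin 3, (T w : EuclideanSpace ℝ (Fin 3)) i
      = ((WithLp.equiv 2 (Fin 3 → ℝ)).symm ![x, y, z]) i := fun i => by rw [hw]
  have e0 := hw' 0
  have e1 := hw' 1
  have e2 := hw' 2
  simp only [hT, LinearMap.coe_mk, AddHom.coe_mk, WithLp.equiv_symm_apply, PiLp.toLp_apply,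
    Matrix.cons_val_zero, Matrix.cons_val_one, Matrix.head_cons] at e0 e1 e2
  exact ⟨(w : ℝ → ℝ), w.2.1, w.2.2, e0, e1, e2⟩

/-- Lemma 2.2(b), submersion form. The derivative of the matrix-level
monodromy map, `w ↦ Φ_q(2π)·∫₀^{2π} w(t)·Φ_q(t)⁻¹·N₀·Φ_q(t) dt`, has range exactly
`{Φ_q(2π)·M : tr M = 0}`, on continuous `w`, and also on smooth `w` supported in any
prescribed nonempty open subinterval of `(0,2π)`. -/
theorem stmt_3 (q : ℝ → ℝ) (hq : Continuous q)
    -- `Φ` is the fundamental matrix of the potential `q`: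
    (Φ : ℝ → Matrix (Fin 2) (Fin 2) ℝ)
    (hΦ0 : Φ 0 = 1)
    (hΦ : ∀ t : ℝ, ∀ i j, HasDerivAt (fun s => Φ s i j) ((!![0, 1; q t, 0] * Φ t) i j) t) :
    ((fun w : ℝ → ℝ => Φ (2 * π) * monInt w Φ) ''
        {w : ℝ → ℝ | ContinuousOn w (Icc 0 (2 * π))} =
      {X : Matrix (Fin 2) (Fin 2) ℝ |
        ∃ M : Matrix (Fin 2) (Fin 2) ℝ, M.trace = 0 ∧ X = Φ (2 * π) * M}) ∧
    ∀ a b : ℝ, 0 ≤ a → a < b → b ≤ 2 * π →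
      (fun w : ℝ → ℝ => Φ (2 * π) * monInt w Φ) ''
          {w : ℝ → ℝ | ContDiff ℝ (⊤ : ℕ∞) w ∧ tsupport w ⊆ Ioo a b} =
        {X : Matrix (Fin 2) (Fin 2) ℝ |
          ∃ M : Matrix (Fin 2) (Fin 2) ℝ, M.trace = 0 ∧ X = Φ (2 * π) * M} := by
  
  -- the Wronskian is constantly 1
  have hdet : ∀ t, Φ t 0 0 * Φ t 1 1 - Φ t 0 1 * Φ t 1 0 = 1 := by
    have hu : ∀ t j, HasDerivAt (fun s => Φ s 0 j) (Φ t 1 j) t := by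
      intro t j
      simpa [Matrix.mul_apply, Fin.sum_univ_two] using hΦ t 0 j
    have hv : ∀ t j, HasDerivAt (fun s => Φ s 1 j) (q t * Φ t 0 j) t := by
      intro t j
      simpa [Matrix.mul_apply, Fin.sum_univ_two] using hΦ t 1 j
    have hd : ∀ t, HasDerivAt (fun s => Φ s 0 0 * Φ s 1 1 - Φ s 0 1 * Φ s 1 0) 0 t := by
      intro t
      have := (((hu t 0).mul (hv t 1)).sub ((hu t 1).mul (hv t 0)))
      convert this using 1
      · rfl
      · rfl
      · rfl
      ring
    intro t
    have hconst : (fun s => Φ s 0 0 * Φ s 1 1 - Φ s 0 1 * Φ s 1 0) t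
        = (fun s => Φ s 0 0 * Φ s 1 1 - Φ s 0 1 * Φ s 1 0) 0 :=
      is_const_of_deriv_eq_zero (fun s => (hd s).differentiableAt) (fun s => (hd s).deriv) t 0
    simp only at hconst
    rw [hconst, hΦ0]
    simp
  -- the conjugated matrix, explicitly
  have hA : ∀ t, (Φ t)⁻¹ * N0 * Φ t =
      !![-(Φ t 0 0 * Φ t 0 1), -(Φ t 0 1 * Φ t 0 1);
         Φ t 0 0 * Φ t 0 0, Φ t 0 0 * Φ t 0 1] := by
    intro t
    have hinv : (Φ t)⁻¹ = !![Φ t 1 1, -(Φ t 0 1); -(Φ t 1 0), Φ t 0 0] := by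
      apply Matrix.inv_eq_right_inv
      have h := hdet t
      ext i j
      fin_cases i <;> fin_cases j <;>
        simp [Matrix.mul_apply, Fin.sum_univ_two] <;> linarith
    rw [hinv]
    ext i j
    have h := hdet t
    fin_cases i <;> fin_cases j <;>
      simp [N0, Matrix.mul_apply, Fin.sum_univ_two] <;> ring
  -- the trace of `monInt w Φ` always vanishes
  have hTr : ∀ w : ℝ → ℝ, (monInt w Φ).trace = 0 := by
    intro w
    rw [Matrix.trace_fin_two]
    have h00 : monInt w Φ 0 0
        = ∫ t in (0:ℝ)..(2 * π), w t * (((Φ t)⁻¹ * N0 * Φ t) 0 0) := rfl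
    have h11 : monInt w Φ 1 1
        = ∫ t in (0:ℝ)..(2 * π), w t * (((Φ t)⁻¹ * N0 * Φ t) 1 1) := rfl
    have hneg : (∫ t in (0:ℝ)..(2 * π), w t * (((Φ t)⁻¹ * N0 * Φ t) 0 0))
        = ∫ t in (0:ℝ)..(2 * π), -(w t * (((Φ t)⁻¹ * N0 * Φ t) 1 1)) := by
      apply intervalIntegral.integral_congr
      intro t _
      dsimp only
      rw [hA t]
      simp
      try ring
    rw [intervalIntegral.integral_neg] at hneg
    rw [h00, h11, hneg]
    ring
  -- entrywise description of `monInt`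
  have hEnt : ∀ (w : ℝ → ℝ) (i j : Fin 2), monInt w Φ i j
      = ∫ t in (0:ℝ)..(2 * π), w t *
          ((!![-(Φ t 0 0 * Φ t 0 1), -(Φ t 0 1 * Φ t 0 1);
             Φ t 0 0 * Φ t 0 0, Φ t 0 0 * Φ t 0 1] : Matrix (Fin 2) (Fin 2) ℝ) i j) := by
    intro w i j
    apply intervalIntegral.integral_congr
    intro t _
    dsimp only
    rw [hA t]
  -- the key part: the second assertion
  have key : ∀ a b : ℝ, 0 ≤ a → a < b → b ≤ 2 * π →
      (fun w : ℝ → ℝ => Φ (2 * π) * monInt w Φ) ''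
          {w : ℝ → ℝ | ContDiff ℝ (⊤ : ℕ∞) w ∧ tsupport w ⊆ Ioo a b} =
        {X : Matrix (Fin 2) (Fin 2) ℝ |
          ∃ M : Matrix (Fin 2) (Fin 2) ℝ, M.trace = 0 ∧ X = Φ (2 * π) * M} := by
    intro a b h0 hab hb
    ext X
    constructor
    · rintro ⟨w, -, rfl⟩
      exact ⟨monInt w Φ, hTr w, rfl⟩
    · rintro ⟨M, hM, rfl⟩
      rw [Matrix.trace_fin_two] at hM
      obtain ⟨w, hw1, hw2, hx, hy, hz⟩ := surj q Φ hΦ hdet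
        (fun {a b} h0 hb {g} hg h t ht => bump_test h0 hb hg h ht)
        h0 hab hb (M 1 0) (M 1 1) (-(M 0 1))
      refine ⟨w, ⟨hw1, hw2⟩, ?_⟩
      have hMeq : monInt w Φ = M := by
        ext i j
        fin_cases i <;> fin_cases j
        · show monInt w Φ 0 0 = M 0 0
          rw [hEnt w 0 0]
          have : (∫ t in (0:ℝ)..(2 * π), w t *
              ((!![-(Φ t 0 0 * Φ t 0 1), -(Φ t 0 1 * Φ t 0 1);
                 Φ t 0 0 * Φ t 0 0, Φ t 0 0 * Φ t 0 1] : Matrix (Fin 2) (Fin 2) ℝ) 0 0))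
              = ∫ t in (0:ℝ)..(2 * π), -(w t * (Φ t 0 0 * Φ t 0 1)) := by
            apply intervalIntegral.integral_congr
            intro t _
            dsimp only
            simp
          rw [this, intervalIntegral.integral_neg, hy]
          linarith
        · show monInt w Φ 0 1 = M 0 1
          rw [hEnt w 0 1]
          have : (∫ t in (0:ℝ)..(2 * π), w t *
              ((!![-(Φ t 0 0 * Φ t 0 1), -(Φ t 0 1 * Φ t 0 1);
                 Φ t 0 0 * Φ t 0 0, Φ t 0 0 * Φ t 0 1] : Matrix (Fin 2) (Fin 2) ℝ) 0 1))
              = ∫ t in (0:ℝ)..(2 * π), -(w t * (Φ t 0 1 * Φ t 0 1)) := by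
            apply intervalIntegral.integral_congr
            intro t _
            dsimp only
            simp
          rw [this, intervalIntegral.integral_neg, hz]
          ring
        · show monInt w Φ 1 0 = M 1 0
          rw [hEnt w 1 0]
          have : (∫ t in (0:ℝ)..(2 * π), w t *
              ((!![-(Φ t 0 0 * Φ t 0 1), -(Φ t 0 1 * Φ t 0 1);
                 Φ t 0 0 * Φ t 0 0, Φ t 0 0 * Φ t 0 1] : Matrix (Fin 2) (Fin 2) ℝ) 1 0))
              = ∫ t in (0:ℝ)..(2 * π), w t * (Φ t 0 0 * Φ t 0 0) := by
            apply intervalIntegral.integral_congr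
            intro t _
            dsimp only
            simp
          rw [this, hx]
        · show monInt w Φ 1 1 = M 1 1
          rw [hEnt w 1 1]
          have : (∫ t in (0:ℝ)..(2 * π), w t *
              ((!![-(Φ t 0 0 * Φ t 0 1), -(Φ t 0 1 * Φ t 0 1);
                 Φ t 0 0 * Φ t 0 0, Φ t 0 0 * Φ t 0 1] : Matrix (Fin 2) (Fin 2) ℝ) 1 1))
              = ∫ t in (0:ℝ)..(2 * π), w t * (Φ t 0 0 * Φ t 0 1) := by
            apply intervalIntegral.integral_congr
            intro t _
            dsimp only
            simp
          rw [this, hy]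
      show Φ (2 * π) * monInt w Φ = Φ (2 * π) * M
      rw [hMeq]
  refine ⟨?_, key⟩
  ext X
  constructor
  · rintro ⟨w, -, rfl⟩
    exact ⟨monInt w Φ, hTr w, rfl⟩
  · intro hX
    rw [← key 0 (2 * π) le_rfl (by positivity) le_rfl] at hX
    obtain ⟨w, ⟨hw1, -⟩, rfl⟩ := hX
    exact ⟨w, hw1.continuous.continuousOn, rfl⟩
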